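/- Let q be a nonzero real number, let I ⊆ ℝ be an open interval, and let β : I → ℝ be a positive, twice continuously differentiable function satisfying β(s)·β''(s) - β'(s)²/2 + q²/2 = 0 for all s ∈ I. Then either there exist real constants A_0 ≠ 0 and s_0 with β(s) = A_0 (s + s_0)² - q²/(4 A_0) for all s ∈ I, or there exists a real constant σ with β(s) = q(s + σ) for all s ∈ I, or there exists a real constant σ with β(s) = -q(s + σ) for all s ∈ I. -/

import Mathlib

lemma my_const_aux {a b : ℝ} (f : ℝ → ℝ)
    (hf : ∀ x ∈ Set.Ioo a b, HasDerivAt f 0 x)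
    {x y : ℝ} (hx : x ∈ Set.Ioo a b) (hy : y ∈ Set.Ioo a b) : f x = f y := by
  apply (convex_Ioo a b).is_const_of_fderivWithin_eq_zero
    (fun z hz => (hf z hz).differentiableAt.differentiableWithinAt) ?_ hx hy
  intro z hz
  rw [fderivWithin_of_isOpen isOpen_Ioo hz, (hf z hz).hasFDerivAt.fderiv]
  ext
  simp

/-- Classification of positive solutions of `β β'' - (β')²/2 + q²/2 = 0` (equation
(3.15), `μᵢ = 0`) on an open interval: `β` is either the quadratic
`A₀(s+s₀)² - q²/(4A₀)` or one of the linear solutions `±q(s+σ)`. -/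
theorem stmt_10 (q : ℝ) (hq : q ≠ 0) (a b : ℝ) (hab : a < b)
    (β : ℝ → ℝ) (hβ : ContDiffOn ℝ 2 β (Set.Ioo a b))
    (hpos : ∀ s ∈ Set.Ioo a b, 0 < β s)
    (hode : ∀ s ∈ Set.Ioo a b,
      β s * deriv (deriv β) s - (deriv β s) ^ 2 / 2 + q ^ 2 / 2 = 0) :
    (∃ A0 : ℝ, A0 ≠ 0 ∧ ∃ s0 : ℝ,
        ∀ s ∈ Set.Ioo a b, β s = A0 * (s + s0) ^ 2 - q ^ 2 / (4 * A0)) ∨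
    (∃ σ : ℝ, ∀ s ∈ Set.Ioo a b, β s = q * (s + σ)) ∨
    (∃ σ : ℝ, ∀ s ∈ Set.Ioo a b, β s = -q * (s + σ)) := by
  set S := Set.Ioo a b with hS
  have hopen : IsOpen S := isOpen_Ioo
  have hd1 : ∀ x ∈ S, HasDerivAt β (deriv β x) x := fun x hx =>
    (((hβ.differentiableOn (by norm_num)) x hx).differentiableAt
      (hopen.mem_nhds hx)).hasDerivAt
  have h2 : ContDiffOn ℝ 1 (deriv β) S := hβ.deriv_of_isOpen hopen (m := 1) (by norm_num)
  have hd2 : ∀ x ∈ S, HasDerivAt (deriv β) (deriv (deriv β) x) x := fun x hx =>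
    (((h2.differentiableOn (by norm_num)) x hx).differentiableAt
      (hopen.mem_nhds hx)).hasDerivAt
  -- g = (β'^2 - q^2)/β has derivative zero
  have hgder : ∀ x ∈ S, HasDerivAt (fun x => (deriv β x ^ 2 - q ^ 2) / β x) 0 x := by
    intro x hx
    have hβx := (hpos x hx).ne'
    have hnum : HasDerivAt (fun x => deriv β x ^ 2 - q ^ 2)
        (2 * deriv β x * deriv (deriv β) x) x := by
      have := ((hd2 x hx).pow 2).sub_const (q ^ 2)
      simpa [mul_comm, mul_assoc, mul_left_comm] using this
    have hdiv := hnum.div (hd1 x hx) hβx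
    refine hdiv.congr_deriv ?_
    have ho := hode x hx
    rw [div_eq_iff (pow_ne_zero 2 hβx)]
    linear_combination (2 * deriv β x) * ho
  set x0 := (a + b) / 2 with hx0def
  have hx0 : x0 ∈ S := Set.mem_Ioo.mpr ⟨by linarith, by linarith⟩
  set c := (deriv β x0 ^ 2 - q ^ 2) / β x0 with hc
  have hrel : ∀ x ∈ S, deriv β x ^ 2 = q ^ 2 + c * β x := by
    intro x hx
    have h := my_const_aux _ hgder hx hx0
    have hβx := (hpos x hx).ne'
    have hβ0 := (hpos x0 hx0).ne'
    rw [div_eq_div_iff hβx hβ0] at h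
    rw [hc]
    field_simp
    linear_combination h
  by_cases hc0 : c = 0
  · -- linear case : β' ^ 2 = q ^ 2 everywhere, β' constant by connectedness
    have hsq : ∀ x ∈ S, deriv β x ^ 2 = q ^ 2 := by
      intro x hx; have := hrel x hx; rw [hc0] at this; linarith
    have hpm : ∀ x ∈ S, deriv β x = q ∨ deriv β x = -q := by
      intro x hx
      have h : (deriv β x - q) * (deriv β x + q) = 0 := by linear_combination hsq x hx
      rcases mul_eq_zero.mp h with h | h
      · left; linarith
      · right; linarith
    have hconst : ∀ x ∈ S, deriv β x = deriv β x0 := by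
      intro x hx
      by_contra hne
      have himg : IsPreconnected (deriv β '' S) :=
        isPreconnected_Ioo.image _ h2.continuousOn
      have hord := himg.ordConnected
      have hmx : deriv β x ∈ deriv β '' S := ⟨x, hx, rfl⟩
      have hmx0 : deriv β x0 ∈ deriv β '' S := ⟨x0, hx0, rfl⟩
      have hzero : (0 : ℝ) ∈ deriv β '' S := by
        rcases hpm x hx with h1 | h1 <;> rcases hpm x0 hx0 with h0 | h0
        · exact absurd (h1.trans h0.symm) hne
        · rcases le_total q 0 with hql | hql
          · exact hord.out hmx hmx0 ⟨by linarith, by linarith⟩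
          · exact hord.out hmx0 hmx ⟨by linarith, by linarith⟩
        · rcases le_total q 0 with hql | hql
          · exact hord.out hmx0 hmx ⟨by linarith, by linarith⟩
          · exact hord.out hmx hmx0 ⟨by linarith, by linarith⟩
        · exact absurd (h1.trans h0.symm) hne
      obtain ⟨z, hz, hz0⟩ := hzero
      have := hsq z hz
      rw [hz0] at this
      exact hq (by nlinarith)
    rcases hpm x0 hx0 with hq0 | hq0
    · -- β' = q
      right; left
      refine ⟨β x0 / q - x0, fun x hx => ?_⟩
      have hder : ∀ y ∈ S, HasDerivAt (fun y => β y - q * y) 0 y := by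
        intro y hy
        have := (hd1 y hy).sub ((hasDerivAt_id y).const_mul q)
        rw [hconst y hy, hq0] at this
        exact this.congr_deriv (by simp)
      have h := my_const_aux _ hder hx hx0
      rw [show q * (x + (β x0 / q - x0)) = q * x + (β x0 - q * x0) by field_simp]
      linarith
    · right; right
      refine ⟨-β x0 / q - x0, fun x hx => ?_⟩
      have hder : ∀ y ∈ S, HasDerivAt (fun y => β y + q * y) 0 y := by
        intro y hy
        have := (hd1 y hy).add ((hasDerivAt_id y).const_mul q)
        rw [hconst y hy, hq0] at this
        exact this.congr_deriv (by simp)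
      have h := my_const_aux _ hder hx hx0
      rw [show -q * (x + (-β x0 / q - x0)) = -q * x + (β x0 + q * x0) by field_simp; ring]
      linarith
  · -- quadratic case
    left
    have hsnd : ∀ x ∈ S, deriv (deriv β) x = c / 2 := by
      intro x hx
      have ho := hode x hx
      have hr := hrel x hx
      have hβx := (hpos x hx).ne'
      have : β x * deriv (deriv β) x = β x * (c / 2) := by linarith
      exact mul_left_cancel₀ hβx this
    set B := deriv β x0 - c / 2 * x0 with hB
    have hder1 : ∀ x ∈ S, deriv β x = c / 2 * x + B := by
      intro x hx
      have hder : ∀ y ∈ S, HasDerivAt (fun y => deriv β y - c / 2 * y) 0 y := by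
        intro y hy
        have := (hd2 y hy).sub ((hasDerivAt_id y).const_mul (c / 2))
        rw [hsnd y hy] at this
        exact this.congr_deriv (by simp)
      have h := my_const_aux _ hder hx hx0
      rw [hB]; linarith
    set C := β x0 - (c / 4 * x0 ^ 2 + B * x0) with hC
    have hval : ∀ x ∈ S, β x = c / 4 * x ^ 2 + B * x + C := by
      intro x hx
      have hder : ∀ y ∈ S, HasDerivAt (fun y => β y - (c / 4 * y ^ 2 + B * y)) 0 y := by
        intro y hy
        have hp : HasDerivAt (fun y : ℝ => c / 4 * y ^ 2 + B * y)
            (c / 4 * (2 * y) + B) y := by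
          have h1 : HasDerivAt (fun y : ℝ => y ^ 2) (2 * y) y := by
            simpa using hasDerivAt_pow 2 y
          exact ((h1.const_mul (c / 4)).add ((hasDerivAt_id y).const_mul B)).congr_deriv (by simp)
        have := (hd1 y hy).sub hp
        rw [hder1 y hy] at this
        have he : c / 2 * y + B - (c / 4 * (2 * y) + B) = 0 := by ring
        rw [he] at this
        exact this
      have h := my_const_aux _ hder hx hx0
      rw [hC]; linarith
    -- pin down C from the relation at x0
    have hCval : B ^ 2 = q ^ 2 + c * C := by
      have hr := hrel x0 hx0
      rw [hder1 x0 hx0, hval x0 hx0] at hr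
      linear_combination hr
    clear_value C B c x0
    refine ⟨c / 4, div_ne_zero hc0 (by norm_num), 2 * B / c, fun x hx => ?_⟩
    rw [hval x hx]
    have h4 : (4 : ℝ) * (c / 4) = c := by ring
    rw [h4]
    field_simp
    linear_combination (-4 : ℝ) * hCval
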